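/- Let G be an undirected graph with vertex partition {V₁, …, V_k}, and let G' be the DAG with vertex set U ∪ V(G) ∪ W where U = {u₁,…,u_{k+1}}, W = {w₁,…,w_{k+1}}, and arcs: all (u, w) for u ∈ U, w ∈ W; arcs (u_i, v) for i ∈ [k], v ∈ V_i; arcs (v, w_i) for i ∈ [k], v ∈ V_i; plus an acyclic orientation of E(G) in which every edge between V_i and V_j with i < j is directed from V_i to V_j. Then U is reconfigurable into W in G' under directed token sliding if and only if G has an independent set containing exactly one vertex from each V_i. -/

import Mathlib

open scoped Classical

section GenHelp
variable {α : Type*} [DecidableEq α]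

lemma step_facts {I J : Finset α} {u v : α}
    (h1 : I \ J = {u}) (h2 : J \ I = {v}) :
    u ∈ I ∧ u ∉ J ∧ v ∈ J ∧ v ∉ I ∧ I.erase u = J.erase v := by
  have hu : u ∈ I \ J := h1 ▸ Finset.mem_singleton_self u
  have hv : v ∈ J \ I := h2 ▸ Finset.mem_singleton_self v
  obtain ⟨huI, huJ⟩ := Finset.mem_sdiff.1 hu
  obtain ⟨hvJ, hvI⟩ := Finset.mem_sdiff.1 hv
  refine ⟨huI, huJ, hvJ, hvI, ?_⟩
  ext x
  simp only [Finset.mem_erase]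
  constructor
  · rintro ⟨hxu, hxI⟩
    have hxJ : x ∈ J := by
      by_contra hxJ
      have hx : x ∈ I \ J := Finset.mem_sdiff.2 ⟨hxI, hxJ⟩
      rw [h1] at hx; exact hxu (Finset.mem_singleton.1 hx)
    refine ⟨?_, hxJ⟩; rintro rfl; exact hvI hxI
  · rintro ⟨hxv, hxJ⟩
    have hxI : x ∈ I := by
      by_contra hxI
      have hx : x ∈ J \ I := Finset.mem_sdiff.2 ⟨hxJ, hxI⟩
      rw [h2] at hx; exact hxv (Finset.mem_singleton.1 hx)
    refine ⟨?_, hxI⟩; rintro rfl; exact huJ hxJ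

lemma step_sum {I J : Finset α} {u v : α}
    (h1 : I \ J = {u}) (h2 : J \ I = {v}) (g : α → ℕ) :
    (∑ x ∈ J, g x) + g u = (∑ x ∈ I, g x) + g v := by
  obtain ⟨huI, huJ, hvJ, hvI, he⟩ := step_facts h1 h2
  have e1 : g u + ∑ x ∈ I.erase u, g x = ∑ x ∈ I, g x := Finset.add_sum_erase _ _ huI
  have e2 : g v + ∑ x ∈ J.erase v, g x = ∑ x ∈ J, g x := Finset.add_sum_erase _ _ hvJ
  rw [he] at e1
  omega

lemma step_card {I J : Finset α} {u v : α}
    (h1 : I \ J = {u}) (h2 : J \ I = {v}) : J.card = I.card := by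
  have := step_sum h1 h2 (fun _ => 1)
  simpa using this

lemma step_filter {I J : Finset α} {u v : α}
    (h1 : I \ J = {u}) (h2 : J \ I = {v}) (p : α → Prop) [DecidablePred p]
    (hp : p u ↔ p v) : (J.filter p).card = (I.filter p).card := by
  have hsum := step_sum h1 h2 (fun x => if p x then 1 else 0)
  rw [Finset.sum_boole, Finset.sum_boole, Nat.cast_id, Nat.cast_id] at hsum
  show (Finset.filter (fun x => p x) J).card = (Finset.filter (fun x => p x) I).card
  by_cases h : p u
  · have h' : p v := hp.1 h
    simp [h, h'] at hsum; omega
  · have h' : ¬ p v := fun hv => h (hp.2 hv)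
    simp [h, h'] at hsum; omega

end GenHelp


variable {V : Type*}

/-- The underlying undirected simple graph of a digraph given by its arc relation. -/
def underlying (A : V → V → Prop) : SimpleGraph V := SimpleGraph.fromRel A

/-- A polytree: a loopless digraph without antiparallel arcs whose underlying graph is a tree. -/
def IsPolytree (A : V → V → Prop) : Prop :=
  (∀ v, ¬ A v v) ∧ (∀ u v, A u v → ¬ A v u) ∧ (underlying A).IsTree

/-- `x` lies in the weakly connected component of `T - (a,b)` containing the tail `a`. -/
def InCminus (A : V → V → Prop) (a b x : V) : Prop :=
  ((underlying A).deleteEdges {s(a, b)}).Reachable a x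

/-- `w((a,b); X, Y) = |C⁻ ∩ X| - |C⁻ ∩ Y|`. -/
noncomputable def wArc [Fintype V] [DecidableEq V] (A : V → V → Prop)
    (X Y : Finset V) (a b : V) : ℤ :=
  ((X.filter fun x => InCminus A a b x).card : ℤ) -
    ((Y.filter fun x => InCminus A a b x).card : ℤ)

/-- Independence in the underlying undirected graph. -/
def IndepF (A : V → V → Prop) (I : Finset V) : Prop :=
  ∀ u ∈ I, ∀ v ∈ I, ¬ (underlying A).Adj u v

/-- One token-sliding step along an arc, in its direction. -/
def IsStep [DecidableEq V] (A : V → V → Prop) (I J : Finset V) : Prop :=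
  ∃ u v, A u v ∧ I \ J = {u} ∧ J \ I = {v}

/-- A reconfiguration sequence of independent sets under directed token sliding. -/
def IsReconfSeq [DecidableEq V] (A : V → V → Prop) {ℓ : ℕ}
    (f : Fin (ℓ + 1) → Finset V) : Prop :=
  (∀ i, IndepF A (f i)) ∧ ∀ i : Fin ℓ, IsStep A (f i.castSucc) (f i.succ)

/-- `I` is reconfigurable into `J` under directed token sliding. -/
def Reconfigurable [DecidableEq V] (A : V → V → Prop) (I J : Finset V) : Prop :=
  ∃ (ℓ : ℕ) (f : Fin (ℓ + 1) → Finset V),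
    IsReconfSeq A f ∧ f 0 = I ∧ f (Fin.last ℓ) = J

/-- A directed path in the digraph `A`, given by its (distinct) vertices in order. -/
structure DirPath (A : V → V → Prop) where
  len : ℕ
  vtx : Fin (len + 1) → V
  inj : Function.Injective vtx
  arc : ∀ i : Fin len, A (vtx i.castSucc) (vtx i.succ)

namespace DirPath
variable {A : V → V → Prop}
/-- The source of a directed path. -/
def src (p : DirPath A) : V := p.vtx 0
/-- The sink of a directed path. -/
def snk (p : DirPath A) : V := p.vtx (Fin.last p.len)
/-- The second vertex `s'(P)` of a directed path. -/
def sndVtx (p : DirPath A) : V := p.vtx ⟨min 1 p.len, by omega⟩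
/-- The second-to-last vertex `t'(P)` of a directed path. -/
def penVtx (p : DirPath A) : V := p.vtx ⟨p.len - 1, by omega⟩
/-- `v` is a vertex of the path `p`. -/
def mem (p : DirPath A) (v : V) : Prop := ∃ i, p.vtx i = v
/-- `x` is an internal vertex of `p` (neither source nor sink). -/
def internal (p : DirPath A) (x : V) : Prop :=
  ∃ i : Fin (p.len + 1), p.vtx i = x ∧ i ≠ 0 ∧ i ≠ Fin.last p.len
end DirPath

/-- A directed path matching from `X` to `Y`: distinct sources forming `X`,
distinct sinks forming `Y`. -/
def IsDPM [DecidableEq V] {A : V → V → Prop} {k : ℕ}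
    (X Y : Finset V) (P : Fin k → DirPath A) : Prop :=
  (Function.Injective fun i => (P i).src) ∧ (Function.Injective fun i => (P i).snk) ∧
  (Finset.univ.image fun i => (P i).src) = X ∧ (Finset.univ.image fun i => (P i).snk) = Y

/-- The path-set conditions (P1)–(P4). -/
def PathSetConds [DecidableEq V] {A : V → V → Prop} {k : ℕ}
    (X Y : Finset V) (P : Fin k → DirPath A) : Prop :=
  (∀ i, 2 ≤ (P i).len) ∧ IsDPM X Y P ∧
  (∀ i j, i ≠ j → (P i).sndVtx ≠ (P j).sndVtx) ∧
  (∀ i j, i ≠ j → (P i).penVtx ≠ (P j).penVtx)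

/-- Length of the (unique, when it exists) directed path from `u` to `v`. -/
noncomputable def ddist (A : V → V → Prop) (u v : V) : ℕ :=
  sInf {n | ∃ p : DirPath A, p.src = u ∧ p.snk = v ∧ p.len = n}

/-- A biased path pair: a common internal vertex `x` with
`dist(s(p),x) > dist(s(q),x)` and `dist(x,t(p)) > dist(x,t(q))`. -/
def BiasedPair (A : V → V → Prop) (p q : DirPath A) : Prop :=
  ∃ x, p.internal x ∧ q.internal x ∧
    ddist A q.src x < ddist A p.src x ∧ ddist A x q.snk < ddist A x p.snk

/-- A rigid token: `v ∈ X ∩ Y` and all incident arcs have `w`-value `0`. -/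
def RigidTok [Fintype V] [DecidableEq V] (A : V → V → Prop) (X Y : Finset V) (v : V) : Prop :=
  v ∈ X ∧ v ∈ Y ∧ ∀ a b, A a b → (a = v ∨ b = v) → wArc A X Y a b = 0

/-- A blocking arc: `w((u,v)) = 1` and every other arc incident to `u` or `v`
has `w`-value `0`. -/
def BlockingArc [Fintype V] [DecidableEq V] (A : V → V → Prop) (X Y : Finset V)
    (u v : V) : Prop :=
  A u v ∧ wArc A X Y u v = 1 ∧
    ∀ a b, A a b → (a, b) ≠ (u, v) → (a = u ∨ b = u ∨ a = v ∨ b = v) →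
      wArc A X Y a b = 0

/-- A trajectory of a single token along a reconfiguration sequence. -/
def IsTrajectory [DecidableEq V] (A : V → V → Prop) {ℓ : ℕ}
    (f : Fin (ℓ + 1) → Finset V) (g : Fin (ℓ + 1) → V) : Prop :=
  (∀ i, g i ∈ f i) ∧ ∀ i : Fin ℓ,
    g i.succ = g i.castSucc ∨
      (f i.castSucc \ f i.succ = {g i.castSucc} ∧ f i.succ \ f i.castSucc = {g i.succ})

/-- Number of steps of a reconfiguration sequence sliding a token from `u` to `v`. -/
noncomputable def movesAlong [DecidableEq V] {ℓ : ℕ} (f : Fin (ℓ + 1) → Finset V)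
    (u v : V) : ℕ :=
  (Finset.univ.filter fun i : Fin ℓ =>
    f i.castSucc \ f i.succ = {u} ∧ f i.succ \ f i.castSucc = {v}).card

/-- Number of forward arc traversals of a walk with vertex list `l`. -/
noncomputable def fwdCount (A : V → V → Prop) (l : List V) : ℕ :=
  (l.zip l.tail).countP fun p => decide (A p.1 p.2)

/-- Number of reverse arc traversals of a walk with vertex list `l`. -/
noncomputable def revCount (A : V → V → Prop) (l : List V) : ℕ :=
  (l.zip l.tail).countP fun p => decide (A p.2 p.1)

/-- Number of traversals of the ordered pair `(a, b)` by a walk with vertex list `l`. -/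
def traverseCount [DecidableEq V] (l : List V) (a b : V) : ℕ :=
  (l.zip l.tail).count (a, b)

/-- A vertex `v` touches a directed path `p` if `N[v]` meets the vertex set of `p`. -/
def Touches (A : V → V → Prop) (v : V) (p : DirPath A) : Prop :=
  ∃ u, p.mem u ∧ (u = v ∨ (underlying A).Adj v u)

/-- Independence in an undirected graph (for undirected token sliding). -/
def UIndep (G : SimpleGraph V) (I : Finset V) : Prop :=
  ∀ u ∈ I, ∀ v ∈ I, ¬ G.Adj u v

/-- One undirected token-sliding step along an edge. -/
def UIsStep [DecidableEq V] (G : SimpleGraph V) (I J : Finset V) : Prop :=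
  ∃ u v, G.Adj u v ∧ I \ J = {u} ∧ J \ I = {v}

/-- Reconfigurability under (undirected) token sliding. -/
def UReconfigurable [DecidableEq V] (G : SimpleGraph V) (I J : Finset V) : Prop :=
  ∃ (ℓ : ℕ) (f : Fin (ℓ + 1) → Finset V),
    (∀ i, UIndep G (f i)) ∧ (∀ i : Fin ℓ, UIsStep G (f i.castSucc) (f i.succ)) ∧
    f 0 = I ∧ f (Fin.last ℓ) = J

/-- The DAG `G'` of the reduction from Multicolored Independent Set:
vertices `U ⊕ V(G) ⊕ W` with `|U| = |W| = k + 1`; all arcs from `U` to `W`;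
arcs `(u_i, v)` and `(v, w_i)` for `v ∈ V_i` (`i ∈ [k]`, encoded by `Vc v = i`);
and an orientation `D` of the edges of `G`. -/
def A15 {V : Type*} (k : ℕ) (Vc : V → Fin k) (D : V → V → Prop) :
    Fin (k + 1) ⊕ V ⊕ Fin (k + 1) → Fin (k + 1) ⊕ V ⊕ Fin (k + 1) → Prop
  | Sum.inl _, Sum.inr (Sum.inr _) => True
  | Sum.inl i, Sum.inr (Sum.inl v) => ∃ j : Fin k, i = j.castSucc ∧ Vc v = j
  | Sum.inr (Sum.inl v), Sum.inr (Sum.inr i) => ∃ j : Fin k, i = j.castSucc ∧ Vc v = j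
  | Sum.inr (Sum.inl u), Sum.inr (Sum.inl v) => D u v
  | _, _ => False


section ReconfHelp
variable {α : Type*} [DecidableEq α] {A : α → α → Prop}

lemma indep_pair {I : Finset α} (h : IndepF A I) {u v : α}
    (hu : u ∈ I) (hv : v ∈ I) (hne : u ≠ v) (harc : A u v) : False := by
  exact h u hu v hv ((SimpleGraph.fromRel_adj A u v).2 ⟨hne, Or.inl harc⟩)

lemma reconf_refl {I : Finset α} (hI : IndepF A I) : Reconfigurable A I I :=
  ⟨0, fun _ => I, ⟨fun _ => hI, fun i => i.elim0⟩, rfl, rfl⟩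

lemma reconf_cons {I J K : Finset α} (hI : IndepF A I) (hstep : IsStep A I J)
    (h : Reconfigurable A J K) : Reconfigurable A I K := by
  obtain ⟨ℓ, f, ⟨hind, hsteps⟩, h0, hl⟩ := h
  refine ⟨ℓ + 1, Fin.cases I f, ⟨?_, ?_⟩, ?_, ?_⟩
  · intro i
    induction i using Fin.cases with
    | zero => simpa using hI
    | succ j => simpa using hind j
  · intro i
    induction i using Fin.cases with
    | zero =>
      have e1 : ((0 : Fin (ℓ + 1)).castSucc : Fin (ℓ + 2)) = 0 := rfl
      rw [e1]
      simp only [Fin.cases_zero, Fin.cases_succ, h0]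
      exact hstep
    | succ j =>
      have e1 : (j.succ).castSucc = (j.castSucc).succ := by
        ext; simp
      rw [e1]
      simp only [Fin.cases_succ]
      exact hsteps j
  · rfl
  · rw [← Fin.succ_last]
    simpa only [Fin.cases_succ] using hl

end ReconfHelp

section A15Help
variable {V : Type*} {k : ℕ} {Vc : V → Fin k} {D : V → V → Prop}

/-- The slot of a vertex of `G'`. -/
def slot15 (Vc : V → Fin k) : Fin (k + 1) ⊕ V ⊕ Fin (k + 1) → ℕ
  | Sum.inl i => i
  | Sum.inr (Sum.inl v) => Vc v
  | Sum.inr (Sum.inr i) => i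

lemma A15_no_into_inl {a : Fin (k + 1) ⊕ V ⊕ Fin (k + 1)} {i : Fin (k + 1)}
    (h : A15 k Vc D a (Sum.inl i)) : False := by
  rcases a with i' | x | i' <;> simp [A15] at h

lemma A15_no_from_w {b : Fin (k + 1) ⊕ V ⊕ Fin (k + 1)} {i : Fin (k + 1)}
    (h : A15 k Vc D (Sum.inr (Sum.inr i)) b) : False := by
  rcases b with i' | x | i' <;> simp [A15] at h

lemma A15_u_w (i j : Fin (k + 1)) :
    A15 k Vc D (Sum.inl i) (Sum.inr (Sum.inr j)) := by simp [A15]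

lemma A15_from_last {b : Fin (k + 1) ⊕ V ⊕ Fin (k + 1)}
    (h : A15 k Vc D (Sum.inl (Fin.last k)) b) : ∃ i, b = Sum.inr (Sum.inr i) := by
  rcases b with i' | x | i'
  · simp [A15] at h
  · simp only [A15] at h
    obtain ⟨j, hj, -⟩ := h
    exfalso
    have : ((Fin.last k : Fin (k + 1)) : ℕ) = (j.castSucc : ℕ) := by rw [hj]
    simp [Fin.last] at this
    omega
  · exact ⟨i', rfl⟩

lemma A15_into_wlast {a : Fin (k + 1) ⊕ V ⊕ Fin (k + 1)}
    (h : A15 k Vc D a (Sum.inr (Sum.inr (Fin.last k)))) : ∃ i, a = Sum.inl i := by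
  rcases a with i' | x | i'
  · exact ⟨i', rfl⟩
  · simp only [A15] at h
    obtain ⟨j, hj, -⟩ := h
    exfalso
    have : ((Fin.last k : Fin (k + 1)) : ℕ) = (j.castSucc : ℕ) := by rw [hj]
    simp [Fin.last] at this
    omega
  · simp [A15] at h

lemma A15_slot_le (hDord : ∀ u v, D u v → Vc u ≤ Vc v)
    {a b : Fin (k + 1) ⊕ V ⊕ Fin (k + 1)} (h : A15 k Vc D a b)
    (hnot : ¬ ∃ (i : Fin (k + 1)) (j : Fin (k + 1)),
        a = Sum.inl i ∧ b = Sum.inr (Sum.inr j)) :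
    slot15 Vc a ≤ slot15 Vc b := by
  rcases a with i | x | i <;> rcases b with i' | y | i'
  · simp [A15] at h
  · simp only [A15] at h
    obtain ⟨j, hj, hv⟩ := h
    simp only [slot15, hj, hv, Fin.coe_castSucc]
    exact le_rfl
  · exact absurd ⟨i, i', rfl, rfl⟩ hnot
  · simp [A15] at h
  · simp only [A15] at h
    exact hDord x y h
  · simp only [A15] at h
    obtain ⟨j, hj, hv⟩ := h
    simp only [slot15, hj, hv, Fin.coe_castSucc]
    exact le_rfl
  · simp [A15] at h
  · simp [A15] at h
  · simp [A15] at h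

end A15Help

section Backward
variable {V : Type*} [Fintype V] [DecidableEq V]

lemma stmt15_backward {G : SimpleGraph V} {k : ℕ} {Vc : V → Fin k} {D : V → V → Prop}
    (hD2 : ∀ u v, G.Adj u v → D u v ∨ D v u)
    (hDord : ∀ u v, D u v → Vc u ≤ Vc v)
    (hrec : Reconfigurable (A15 k Vc D)
        ((Finset.univ : Finset (Fin (k + 1))).image fun i =>
          (Sum.inl i : Fin (k + 1) ⊕ V ⊕ Fin (k + 1)))
        ((Finset.univ : Finset (Fin (k + 1))).image fun i =>
          (Sum.inr (Sum.inr i) : Fin (k + 1) ⊕ V ⊕ Fin (k + 1)))) :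
    ∃ S : Finset V, UIndep G S ∧ ∀ j : Fin k, ∃! v, v ∈ S ∧ Vc v = j := by
  classical
  obtain ⟨ℓ, f, ⟨hind, hsteps⟩, h0, hl⟩ := hrec
  set A := A15 k Vc D with hA
  let F : ℕ → Finset (Fin (k + 1) ⊕ V ⊕ Fin (k + 1)) := fun n => f ⟨min n ℓ, by omega⟩
  have hF0 : F 0 = (Finset.univ : Finset (Fin (k + 1))).image
      (fun i => (Sum.inl i : Fin (k + 1) ⊕ V ⊕ Fin (k + 1))) := by
    have e : (⟨min 0 ℓ, by omega⟩ : Fin (ℓ + 1)) = 0 := by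
      simp [Fin.ext_iff]
    show f _ = _
    rw [e, h0]
  have hFtop : ∀ n, ℓ ≤ n → F n = (Finset.univ : Finset (Fin (k + 1))).image
      (fun i => (Sum.inr (Sum.inr i) : Fin (k + 1) ⊕ V ⊕ Fin (k + 1))) := by
    intro n hn
    have e : (⟨min n ℓ, by omega⟩ : Fin (ℓ + 1)) = Fin.last ℓ := by
      simp [Fin.ext_iff, Fin.last]; omega
    show f _ = _
    rw [e, hl]
  have hstepF : ∀ n, n < ℓ → IsStep A (F n) (F (n + 1)) := by
    intro n hn
    have e1 : (⟨min n ℓ, by omega⟩ : Fin (ℓ + 1)) = (⟨n, hn⟩ : Fin ℓ).castSucc := by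
      simp [Fin.ext_iff]; omega
    have e2 : (⟨min (n + 1) ℓ, by omega⟩ : Fin (ℓ + 1)) = (⟨n, hn⟩ : Fin ℓ).succ := by
      simp [Fin.ext_iff]; omega
    show IsStep A (f _) (f _)
    rw [e1, e2]
    exact hsteps ⟨n, hn⟩
  have hindF : ∀ n, IndepF A (F n) := fun n => hind _
  have hUW : ∀ n (i j : Fin (k + 1)), Sum.inl i ∈ F n →
      Sum.inr (Sum.inr j) ∈ F n → False := by
    intro n i j h1 h2
    exact indep_pair (hindF n) h1 h2 (by simp) (A15_u_w i j)
  have hWup : ∀ n (i : Fin (k + 1)), Sum.inr (Sum.inr i) ∈ F n →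
      Sum.inr (Sum.inr i) ∈ F (n + 1) := by
    intro n i h
    by_cases hn : n < ℓ
    · obtain ⟨u, v, harc, hd1, hd2⟩ := hstepF n hn
      by_contra h2
      have hx : Sum.inr (Sum.inr i) ∈ F n \ F (n + 1) := Finset.mem_sdiff.2 ⟨h, h2⟩
      rw [hd1] at hx
      have := Finset.mem_singleton.1 hx
      subst this
      exact A15_no_from_w harc
    · rw [hFtop (n + 1) (by omega)]
      rw [hFtop n (by omega)] at h
      exact h
  have hWmono : ∀ m n, m ≤ n → ∀ i : Fin (k + 1),
      Sum.inr (Sum.inr i) ∈ F m → Sum.inr (Sum.inr i) ∈ F n := by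
    intro m n hmn
    induction n, hmn using Nat.le_induction with
    | base => exact fun i h => h
    | succ n hmn ih => exact fun i h => hWup n i (ih i h)
  -- the step at which the token on u_last leaves U
  have hexP : ∃ n, Sum.inl (Fin.last k) ∉ F n := by
    refine ⟨ℓ, ?_⟩
    rw [hFtop ℓ le_rfl]
    simp
  have hn1pos : Nat.find hexP ≠ 0 := by
    intro h
    have h2 := Nat.find_spec hexP
    rw [h, hF0] at h2
    exact h2 (Finset.mem_image.2 ⟨Fin.last k, Finset.mem_univ _, rfl⟩)
  set n0 := Nat.find hexP - 1 with hn0def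
  have hn0a : Sum.inl (Fin.last k) ∈ F n0 := by
    by_contra h
    exact Nat.find_min hexP (by omega) h
  have hn0b : Sum.inl (Fin.last k) ∉ F (n0 + 1) := by
    have e : n0 + 1 = Nat.find hexP := by omega
    rw [e]
    exact Nat.find_spec hexP
  have hn0lt : n0 < ℓ := by
    by_contra h
    rw [hFtop n0 (by omega)] at hn0a
    simp at hn0a
  obtain ⟨u0, v0, harc0, hda0, hdb0⟩ := hstepF n0 hn0lt
  have hu0 : u0 = Sum.inl (Fin.last k) := by
    have hx : Sum.inl (Fin.last k) ∈ F n0 \ F (n0 + 1) := Finset.mem_sdiff.2 ⟨hn0a, hn0b⟩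
    rw [hda0] at hx
    exact (Finset.mem_singleton.1 hx).symm
  subst hu0
  obtain ⟨jw, hjw⟩ := A15_from_last harc0
  subst hjw
  have hv0in : Sum.inr (Sum.inr jw) ∈ F (n0 + 1) :=
    (Finset.mem_sdiff.1 (hdb0 ▸ Finset.mem_singleton_self _)).1
  -- the step at which w_last is filled
  have hexQ : ∃ n, Sum.inr (Sum.inr (Fin.last k)) ∈ F n := by
    refine ⟨ℓ, ?_⟩
    rw [hFtop ℓ le_rfl]
    exact Finset.mem_image.2 ⟨Fin.last k, Finset.mem_univ _, rfl⟩
  have hm1pos : Nat.find hexQ ≠ 0 := by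
    intro h
    have h2 := Nat.find_spec hexQ
    rw [h, hF0] at h2
    simp at h2
  set m0 := Nat.find hexQ - 1 with hm0def
  have hm0a : Sum.inr (Sum.inr (Fin.last k)) ∉ F m0 :=
    Nat.find_min hexQ (by omega)
  have hm0b : Sum.inr (Sum.inr (Fin.last k)) ∈ F (m0 + 1) := by
    have e : m0 + 1 = Nat.find hexQ := by omega
    rw [e]
    exact Nat.find_spec hexQ
  have hm0lt : m0 < ℓ := by
    by_contra h
    rw [hFtop m0 (by omega)] at hm0a
    exact hm0a (Finset.mem_image.2 ⟨Fin.last k, Finset.mem_univ _, rfl⟩)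
  obtain ⟨u1, v1, harc1, hda1, hdb1⟩ := hstepF m0 hm0lt
  have hv1 : v1 = Sum.inr (Sum.inr (Fin.last k)) := by
    have hx : Sum.inr (Sum.inr (Fin.last k)) ∈ F (m0 + 1) \ F m0 :=
      Finset.mem_sdiff.2 ⟨hm0b, hm0a⟩
    rw [hdb1] at hx
    exact (Finset.mem_singleton.1 hx).symm
  subst hv1
  obtain ⟨i1, hi1⟩ := A15_into_wlast harc1
  subst hi1
  have hu1in : Sum.inl i1 ∈ F m0 :=
    (Finset.mem_sdiff.1 (hda1 ▸ Finset.mem_singleton_self _)).1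
  have hm0n0 : m0 = n0 := by
    have h1 : m0 ≤ n0 := by
      by_contra h
      exact hUW m0 i1 jw hu1in (hWmono (n0 + 1) m0 (by omega) jw hv0in)
    have h2 : n0 ≤ m0 := by
      by_contra h
      exact hUW n0 (Fin.last k) (Fin.last k) hn0a
        (hWmono (m0 + 1) n0 (by omega) _ hm0b)
    omega
  have hjwlast : jw = Fin.last k := by
    rw [hm0n0] at hdb1
    have he : ({Sum.inr (Sum.inr jw)} : Finset (Fin (k + 1) ⊕ V ⊕ Fin (k + 1)))
        = {Sum.inr (Sum.inr (Fin.last k))} := by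
      rw [← hdb0, hdb1]
    simpa using he
  subst hjwlast
  -- slot inequalities for all steps
  set sl := slot15 Vc with hsl
  have hslot_le : ∀ n, n < ℓ → ∀ u v, A u v → F n \ F (n + 1) = {u} →
      F (n + 1) \ F n = {v} → sl u ≤ sl v := by
    intro n hn u v harc hd1 hd2
    by_cases hcase : ∃ (i : Fin (k + 1)) (j : Fin (k + 1)),
        u = Sum.inl i ∧ v = Sum.inr (Sum.inr j)
    · obtain ⟨i, j, rfl, rfl⟩ := hcase
      have huin : Sum.inl i ∈ F n :=
        (Finset.mem_sdiff.1 (hd1 ▸ Finset.mem_singleton_self _)).1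
      have hvin : Sum.inr (Sum.inr j) ∈ F (n + 1) :=
        (Finset.mem_sdiff.1 (hd2 ▸ Finset.mem_singleton_self _)).1
      have h1 : n ≤ n0 := by
        by_contra h
        exact hUW n i (Fin.last k) huin (hWmono (n0 + 1) n (by omega) _ hv0in)
      have h2 : n0 ≤ n := by
        by_contra h
        exact hUW n0 (Fin.last k) j hn0a (hWmono (n + 1) n0 (by omega) _ hvin)
      have hnn0 : n = n0 := by omega
      subst hnn0
      have hueq : (Sum.inl i : Fin (k + 1) ⊕ V ⊕ Fin (k + 1))
          = Sum.inl (Fin.last k) := by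
        have he : ({Sum.inl i} : Finset (Fin (k + 1) ⊕ V ⊕ Fin (k + 1)))
            = {Sum.inl (Fin.last k)} := by rw [← hd1, hda0]
        simpa using he
      have hveq : (Sum.inr (Sum.inr j) : Fin (k + 1) ⊕ V ⊕ Fin (k + 1))
          = Sum.inr (Sum.inr (Fin.last k)) := by
        have he : ({Sum.inr (Sum.inr j)} : Finset (Fin (k + 1) ⊕ V ⊕ Fin (k + 1)))
            = {Sum.inr (Sum.inr (Fin.last k))} := by rw [← hd2, hdb0]
        simpa using he
      have hieq : i = Fin.last k := by simpa using hueq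
      have hjeq : j = Fin.last k := by simpa using hveq
      subst hieq; subst hjeq
      exact le_rfl
    · exact A15_slot_le hDord harc hcase
  -- the slot sum is monotone with equal endpoints, hence slots are preserved
  have hsle : ∀ n, (∑ x ∈ F n, sl x) ≤ ∑ x ∈ F (n + 1), sl x := by
    intro n
    by_cases hn : n < ℓ
    · obtain ⟨u, v, harc, hd1, hd2⟩ := hstepF n hn
      have h1 := step_sum hd1 hd2 sl
      have h2 := hslot_le n hn u v harc hd1 hd2
      omega
    · have he : F (n + 1) = F n := by
        rw [hFtop n (by omega), hFtop (n + 1) (by omega)]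
      rw [he]
  have hsum_img : ∀ (g : Fin (k + 1) → Fin (k + 1) ⊕ V ⊕ Fin (k + 1)),
      Function.Injective g → (∀ i, sl (g i) = (i : ℕ)) →
      (∑ x ∈ (Finset.univ : Finset (Fin (k + 1))).image g, sl x)
        = ∑ i : Fin (k + 1), (i : ℕ) := by
    intro g hg hslg
    rw [Finset.sum_image (fun a _ b _ h => hg h)]
    exact Finset.sum_congr rfl fun i _ => hslg i
  have hs0l : (∑ x ∈ F 0, sl x) = ∑ x ∈ F ℓ, sl x := by
    rw [hF0, hFtop ℓ le_rfl,
      hsum_img _ (fun a b h => Sum.inl.inj h) (fun i => rfl),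
      hsum_img _ (fun a b h => Sum.inr.inj (Sum.inr.inj h)) (fun i => rfl)]
  have hmono : Monotone (fun n => ∑ x ∈ F n, sl x) := monotone_nat_of_le_succ hsle
  have hsconst : ∀ n, n ≤ ℓ → (∑ x ∈ F n, sl x) = ∑ x ∈ F 0, sl x := by
    intro n hn
    have h1 : (∑ x ∈ F 0, sl x) ≤ ∑ x ∈ F n, sl x := hmono (Nat.zero_le n)
    have h2 : (∑ x ∈ F n, sl x) ≤ ∑ x ∈ F ℓ, sl x := hmono hn
    omega
  have hslot_eq : ∀ n, n < ℓ → ∀ u v, A u v → F n \ F (n + 1) = {u} →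
      F (n + 1) \ F n = {v} → sl u = sl v := by
    intro n hn u v harc hd1 hd2
    have h1 := step_sum hd1 hd2 sl
    have h2 := hslot_le n hn u v harc hd1 hd2
    have e1 := hsconst n (by omega)
    have e2 := hsconst (n + 1) (by omega)
    omega
  -- slot counts are invariant
  have hNc : ∀ (c : ℕ) n, n ≤ ℓ →
      ((F n).filter fun x => sl x = c).card = ((F 0).filter fun x => sl x = c).card := by
    intro c n hn
    induction n with
    | zero => rfl
    | succ m ih =>
      have hm : m < ℓ := by omega
      obtain ⟨u, v, harc, hd1, hd2⟩ := hstepF m hm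
      have heq := hslot_eq m hm u v harc hd1 hd2
      rw [step_filter hd1 hd2 _ (by rw [heq])]
      exact ih (by omega)
  have hN0 : ∀ c : ℕ, c ≤ k → ((F 0).filter fun x => sl x = c).card = 1 := by
    intro c hc
    rw [hF0, Finset.filter_image]
    rw [Finset.card_image_of_injective _ (fun a b h => Sum.inl.inj h)]
    have he : (Finset.univ.filter fun i : Fin (k + 1) => sl (Sum.inl i) = c)
        = {(⟨c, by omega⟩ : Fin (k + 1))} := by
      ext i
      simp [Fin.ext_iff]
      rfl
    rw [he, Finset.card_singleton]
  -- properties of the configuration T = F n0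
  have hTW : ∀ j : Fin (k + 1), Sum.inr (Sum.inr j) ∉ F n0 := fun j h =>
    hUW n0 (Fin.last k) j hn0a h
  have hTU : ∀ i : Fin (k + 1), Sum.inl i ∈ F n0 → i = Fin.last k := by
    intro i hi
    by_contra h
    have h1 : Sum.inl i ∉ F n0 \ F (n0 + 1) := by
      rw [hda0]
      simp
      exact fun he => h (by simpa using he)
    have hin1 : Sum.inl i ∈ F (n0 + 1) := by
      by_contra h2
      exact h1 (Finset.mem_sdiff.2 ⟨hi, h2⟩)
    exact hUW (n0 + 1) i (Fin.last k) hin1 hv0in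
  -- the multicolored independent set
  refine ⟨Finset.univ.filter fun x : V => Sum.inr (Sum.inl x) ∈ F n0, ?_, ?_⟩
  · intro x hx y hy hadj
    have hx' : Sum.inr (Sum.inl x) ∈ F n0 := (Finset.mem_filter.1 hx).2
    have hy' : Sum.inr (Sum.inl y) ∈ F n0 := (Finset.mem_filter.1 hy).2
    have hxy : x ≠ y := hadj.ne
    rcases hD2 x y hadj with h | h
    · exact indep_pair (hindF n0) hx' hy' (by simp [hxy]) (by simpa [hA, A15] using h)
    · exact indep_pair (hindF n0) hy' hx' (by simp [Ne.symm hxy]) (by simpa [hA, A15] using h)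
  · intro j
    have hfilt : (F n0).filter (fun x => sl x = (j : ℕ)) =
        ((Finset.univ.filter fun x : V => Sum.inr (Sum.inl x) ∈ F n0).filter
          fun v => Vc v = j).image (fun v => Sum.inr (Sum.inl v)) := by
      ext x
      constructor
      · intro hx
        obtain ⟨hxF, hxsl⟩ := Finset.mem_filter.1 hx
        rcases x with i | y | i
        · exfalso
          have := hTU i hxF
          subst this
          have : (Fin.last k : ℕ) = (j : ℕ) := hxsl
          simp [Fin.last] at this
          omega
        · refine Finset.mem_image.2 ⟨y, ?_, rfl⟩
          refine Finset.mem_filter.2 ⟨Finset.mem_filter.2 ⟨Finset.mem_univ _, hxF⟩, ?_⟩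
          have : (Vc y : ℕ) = (j : ℕ) := hxsl
          exact Fin.ext this
        · exact absurd hxF (hTW i)
      · intro hx
        obtain ⟨y, hy, rfl⟩ := Finset.mem_image.1 hx
        obtain ⟨hy1, hy2⟩ := Finset.mem_filter.1 hy
        refine Finset.mem_filter.2 ⟨(Finset.mem_filter.1 hy1).2, ?_⟩
        show (Vc y : ℕ) = (j : ℕ)
        rw [hy2]
    have h1 : (((Finset.univ.filter fun x : V => Sum.inr (Sum.inl x) ∈ F n0).filter
        fun v => Vc v = j).image
          (fun v => (Sum.inr (Sum.inl v) : Fin (k + 1) ⊕ V ⊕ Fin (k + 1)))).card = 1 := by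
      rw [← hfilt, hNc _ n0 (le_of_lt hn0lt)]
      exact hN0 _ (by omega)
    rw [Finset.card_image_of_injective _
      (fun a b h => Sum.inl.inj (Sum.inr.inj h))] at h1
    obtain ⟨a, ha⟩ := Finset.card_eq_one.1 h1
    have haa : a ∈ (Finset.univ.filter fun x : V => Sum.inr (Sum.inl x) ∈ F n0).filter
        fun v => Vc v = j := by
      rw [ha]; exact Finset.mem_singleton_self a
    obtain ⟨ha1, ha2⟩ := Finset.mem_filter.1 haa
    refine ⟨a, ⟨ha1, ha2⟩, ?_⟩
    intro y hy
    have : y ∈ (Finset.univ.filter fun x : V => Sum.inr (Sum.inl x) ∈ F n0).filter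
        fun v => Vc v = j := Finset.mem_filter.2 ⟨hy.1, hy.2⟩
    rw [ha] at this
    exact Finset.mem_singleton.1 this

end Backward

section Forward
variable {V : Type*} [DecidableEq V]

/-- Intermediate configuration in phase 1: tokens `u_i` for `i ≥ m` plus `v_j` for `j < m`. -/
def cfgA (k : ℕ) (g : Fin k → V) (m : ℕ) : Finset (Fin (k + 1) ⊕ V ⊕ Fin (k + 1)) :=
  ((Finset.univ.filter fun i : Fin (k + 1) => m ≤ (i : ℕ)).image fun i => Sum.inl i) ∪
  ((Finset.univ.filter fun j : Fin k => (j : ℕ) < m).image fun j => Sum.inr (Sum.inl (g j)))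

/-- Intermediate configuration in phase 2: token `w_k`, `w_i` for `i < m`, `v_j` for `j ≥ m`. -/
def cfgB (k : ℕ) (g : Fin k → V) (m : ℕ) : Finset (Fin (k + 1) ⊕ V ⊕ Fin (k + 1)) :=
  ((Finset.univ.filter fun i : Fin (k + 1) => (i : ℕ) = k ∨ (i : ℕ) < m).image
    fun i => Sum.inr (Sum.inr i)) ∪
  ((Finset.univ.filter fun j : Fin k => m ≤ (j : ℕ)).image fun j => Sum.inr (Sum.inl (g j)))

lemma mem_cfgA {k : ℕ} {g : Fin k → V} {m : ℕ} {x : Fin (k + 1) ⊕ V ⊕ Fin (k + 1)} :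
    x ∈ cfgA k g m ↔
      (∃ i : Fin (k + 1), m ≤ (i : ℕ) ∧ Sum.inl i = x) ∨
      (∃ j : Fin k, (j : ℕ) < m ∧ Sum.inr (Sum.inl (g j)) = x) := by
  simp [cfgA]

lemma mem_cfgB {k : ℕ} {g : Fin k → V} {m : ℕ} {x : Fin (k + 1) ⊕ V ⊕ Fin (k + 1)} :
    x ∈ cfgB k g m ↔
      (∃ i : Fin (k + 1), ((i : ℕ) = k ∨ (i : ℕ) < m) ∧ Sum.inr (Sum.inr i) = x) ∨
      (∃ j : Fin k, m ≤ (j : ℕ) ∧ Sum.inr (Sum.inl (g j)) = x) := by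
  simp [cfgB]

variable {G : SimpleGraph V} {k : ℕ} {Vc : V → Fin k} {D : V → V → Prop} {S : Finset V}
  {g : Fin k → V}

lemma indep_cfgA (hD1 : ∀ u v, D u v → G.Adj u v) (hSind : UIndep G S)
    (hgS : ∀ j, g j ∈ S) (hgc : ∀ j, Vc (g j) = j) (m : ℕ) :
    IndepF (A15 k Vc D) (cfgA k g m) := by
  have key : ∀ u v, u ∈ cfgA k g m → v ∈ cfgA k g m → A15 k Vc D u v → False := by
    intro u v hu hv harc
    rcases mem_cfgA.1 hu with ⟨i, hi, rfl⟩ | ⟨j, hj, rfl⟩ <;>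
      rcases mem_cfgA.1 hv with ⟨i', hi', rfl⟩ | ⟨j', hj', rfl⟩
    · simp [A15] at harc
    · simp only [A15] at harc
      obtain ⟨j'', hj1, hj2⟩ := harc
      rw [hgc j'] at hj2
      subst hj2
      have : (i : ℕ) = (j' : ℕ) := by rw [hj1]; simp
      omega
    · simp [A15] at harc
    · simp only [A15] at harc
      exact hSind _ (hgS j) _ (hgS j') (hD1 _ _ harc)
  intro u hu v hv hadj
  obtain ⟨hne, h | h⟩ := (SimpleGraph.fromRel_adj _ u v).1 hadj
  · exact key u v hu hv h
  · exact key v u hv hu h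

lemma indep_cfgB (hD1 : ∀ u v, D u v → G.Adj u v) (hSind : UIndep G S)
    (hgS : ∀ j, g j ∈ S) (hgc : ∀ j, Vc (g j) = j) (m : ℕ) :
    IndepF (A15 k Vc D) (cfgB k g m) := by
  have key : ∀ u v, u ∈ cfgB k g m → v ∈ cfgB k g m → A15 k Vc D u v → False := by
    intro u v hu hv harc
    rcases mem_cfgB.1 hu with ⟨i, hi, rfl⟩ | ⟨j, hj, rfl⟩ <;>
      rcases mem_cfgB.1 hv with ⟨i', hi', rfl⟩ | ⟨j', hj', rfl⟩
    · simp [A15] at harc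
    · simp [A15] at harc
    · simp only [A15] at harc
      obtain ⟨j'', hj1, hj2⟩ := harc
      rw [hgc j] at hj2
      subst hj2
      have h1 : (i' : ℕ) = (j : ℕ) := by rw [hj1]; simp
      have h2 : (j : ℕ) < k := j.isLt
      omega
    · simp only [A15] at harc
      exact hSind _ (hgS j) _ (hgS j') (hD1 _ _ harc)
  intro u hu v hv hadj
  obtain ⟨hne, h | h⟩ := (SimpleGraph.fromRel_adj _ u v).1 hadj
  · exact key u v hu hv h
  · exact key v u hv hu h

lemma cfgA_sdiff₁ (g : Fin k → V) {m : ℕ} (hm : m < k) :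
    cfgA k g m \ cfgA k g (m + 1) = {Sum.inl (⟨m, by omega⟩ : Fin (k + 1))} := by
  ext x
  rcases x with i | y | i <;> simp [cfgA, Fin.ext_iff]
  · constructor
    · rintro ⟨⟨a, ha1, ha2⟩, h2⟩
      have := h2 i
      omega
    · intro h
      exact ⟨⟨i, by omega, rfl⟩, fun x hx hxe => by omega⟩
  · intro x hx hxe
    exact ⟨x, by omega, hxe⟩

lemma cfgA_sdiff₂ (hginj : Function.Injective g) {m : ℕ} (hm : m < k) :
    cfgA k g (m + 1) \ cfgA k g m = {Sum.inr (Sum.inl (g ⟨m, hm⟩))} := by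
  ext x
  rcases x with i | y | i <;> simp [cfgA, Fin.ext_iff]
  · intro x h1 h2
    exact ⟨x, by omega, h2⟩
  · constructor
    · rintro ⟨⟨a, ha1, ha2⟩, h2⟩
      have ham : (a : ℕ) = m := by
        by_contra hc
        exact h2 a (by omega) ha2
      have : a = ⟨m, hm⟩ := Fin.ext ham
      rw [← ha2, this]
    · rintro rfl
      refine ⟨⟨⟨m, hm⟩, Nat.le_refl m, rfl⟩, fun x hx hxe => ?_⟩
      have h3 : x = ⟨m, hm⟩ := hginj hxe
      have h4 : (x : ℕ) = m := by rw [h3]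
      omega

lemma cfgAB_sdiff₁ (g : Fin k → V) :
    cfgA k g k \ cfgB k g 0 = {Sum.inl (⟨k, by omega⟩ : Fin (k + 1))} := by
  ext x
  rcases x with i | y | i <;> simp [cfgA, cfgB, Fin.ext_iff]
  constructor
  · rintro ⟨a, h1, h2⟩
    have := i.isLt
    have := a.isLt
    omega
  · intro h
    exact ⟨i, by omega, rfl⟩

lemma cfgAB_sdiff₂ (g : Fin k → V) :
    cfgB k g 0 \ cfgA k g k = {Sum.inr (Sum.inr (⟨k, by omega⟩ : Fin (k + 1)))} := by
  ext x
  rcases x with i | y | i <;> simp [cfgA, cfgB, Fin.ext_iff]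
  constructor
  · rintro ⟨a, h1, h2⟩
    omega
  · intro h
    exact ⟨i, by omega, rfl⟩

lemma cfgB_sdiff₁ (hginj : Function.Injective g) {m : ℕ} (hm : m < k) :
    cfgB k g m \ cfgB k g (m + 1) = {Sum.inr (Sum.inl (g ⟨m, hm⟩))} := by
  ext x
  rcases x with i | y | i <;> simp [cfgB, Fin.ext_iff]
  · constructor
    · rintro ⟨⟨a, ha1, ha2⟩, h2⟩
      have ham : (a : ℕ) = m := by
        by_contra hc
        exact h2 a (by omega) ha2
      have : a = ⟨m, hm⟩ := Fin.ext ham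
      rw [← ha2, this]
    · rintro rfl
      refine ⟨⟨⟨m, hm⟩, Nat.le_refl m, rfl⟩, fun x hx hxe => ?_⟩
      have h3 : x = ⟨m, hm⟩ := hginj hxe
      have h4 : (x : ℕ) = m := by rw [h3]
      omega
  · intro x h1 h2
    exact ⟨x, by omega, h2⟩

lemma cfgB_sdiff₂ (hginj : Function.Injective g) {m : ℕ} (hm : m < k) :
    cfgB k g (m + 1) \ cfgB k g m = {Sum.inr (Sum.inr (⟨m, by omega⟩ : Fin (k + 1)))} := by
  ext x
  rcases x with i | y | i <;> simp [cfgB, Fin.ext_iff]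
  · intro x h1 h2
    exact ⟨x, by omega, h2⟩
  · constructor
    · rintro ⟨⟨a, ha1, ha2⟩, h2⟩
      rcases ha1 with hc | hc
      · exact absurd ha2 (h2 a (Or.inl hc))
      · by_cases hc2 : (a : ℕ) < m
        · exact absurd ha2 (h2 a (Or.inr hc2))
        · omega
    · intro h
      refine ⟨⟨i, by omega, rfl⟩, fun x hx hxe => ?_⟩
      omega

lemma cfgA_zero (g : Fin k → V) :
    cfgA k g 0 = (Finset.univ : Finset (Fin (k + 1))).image
      (fun i => (Sum.inl i : Fin (k + 1) ⊕ V ⊕ Fin (k + 1))) := by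
  ext x
  simp [cfgA]

lemma cfgB_top (g : Fin k → V) :
    cfgB k g k = (Finset.univ : Finset (Fin (k + 1))).image
      (fun i => (Sum.inr (Sum.inr i) : Fin (k + 1) ⊕ V ⊕ Fin (k + 1))) := by
  ext x
  rcases x with i | y | i <;> simp [cfgB]
  omega

lemma stmt15_forward (hD1 : ∀ u v, D u v → G.Adj u v) (hSind : UIndep G S)
    (hS : ∀ j : Fin k, ∃! v, v ∈ S ∧ Vc v = j) :
    Reconfigurable (A15 k Vc D)
        ((Finset.univ : Finset (Fin (k + 1))).image fun i =>
          (Sum.inl i : Fin (k + 1) ⊕ V ⊕ Fin (k + 1)))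
        ((Finset.univ : Finset (Fin (k + 1))).image fun i =>
          (Sum.inr (Sum.inr i) : Fin (k + 1) ⊕ V ⊕ Fin (k + 1))) := by
  classical
  have hgex : ∀ j : Fin k, ∃ v, v ∈ S ∧ Vc v = j := fun j => (hS j).exists
  choose g hgS hgc using hgex
  have hginj : Function.Injective g := by
    intro a b h
    rw [← hgc a, ← hgc b, h]
  have harcA : ∀ (hm : (0:ℕ) < k) (m : ℕ) (h : m < k),
      A15 k Vc D (Sum.inl (⟨m, by omega⟩ : Fin (k + 1))) (Sum.inr (Sum.inl (g ⟨m, h⟩))) := by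
    intro _ m h
    show ∃ j : Fin k, _ = j.castSucc ∧ Vc (g ⟨m, h⟩) = j
    exact ⟨⟨m, h⟩, rfl, hgc _⟩
  -- phase 2
  have hphase2 : ∀ d, d ≤ k → Reconfigurable (A15 k Vc D) (cfgB k g (k - d))
      ((Finset.univ : Finset (Fin (k + 1))).image fun i =>
        (Sum.inr (Sum.inr i) : Fin (k + 1) ⊕ V ⊕ Fin (k + 1))) := by
    intro d
    induction d with
    | zero =>
      intro _
      rw [Nat.sub_zero, cfgB_top g]
      exact reconf_refl (by rw [← cfgB_top g]; exact indep_cfgB hD1 hSind hgS hgc k)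
    | succ n ih =>
      intro hd
      have hm : k - (n + 1) < k := by omega
      have he : k - (n + 1) + 1 = k - n := by omega
      refine reconf_cons (indep_cfgB hD1 hSind hgS hgc _) ?_ (ih (by omega))
      refine ⟨Sum.inr (Sum.inl (g ⟨k - (n + 1), hm⟩)),
        Sum.inr (Sum.inr (⟨k - (n + 1), by omega⟩ : Fin (k + 1))), ?_, ?_, ?_⟩
      · show ∃ j : Fin k, _ = j.castSucc ∧ Vc (g ⟨k - (n + 1), hm⟩) = j
        exact ⟨⟨k - (n + 1), hm⟩, rfl, hgc _⟩
      · have h := cfgB_sdiff₁ (g := g) hginj hm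
        rw [he] at h
        exact h
      · have h := cfgB_sdiff₂ (g := g) hginj hm
        rw [he] at h
        exact h
  -- middle step
  have hmid : Reconfigurable (A15 k Vc D) (cfgA k g k)
      ((Finset.univ : Finset (Fin (k + 1))).image fun i =>
        (Sum.inr (Sum.inr i) : Fin (k + 1) ⊕ V ⊕ Fin (k + 1))) := by
    refine reconf_cons (indep_cfgA hD1 hSind hgS hgc k) ?_
      (by have := hphase2 k le_rfl; rwa [Nat.sub_self] at this)
    refine ⟨Sum.inl (⟨k, by omega⟩ : Fin (k + 1)),
      Sum.inr (Sum.inr (⟨k, by omega⟩ : Fin (k + 1))), ?_, cfgAB_sdiff₁ g, cfgAB_sdiff₂ g⟩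
    show True
    trivial
  -- phase 1
  have hphase1 : ∀ d, d ≤ k → Reconfigurable (A15 k Vc D) (cfgA k g (k - d))
      ((Finset.univ : Finset (Fin (k + 1))).image fun i =>
        (Sum.inr (Sum.inr i) : Fin (k + 1) ⊕ V ⊕ Fin (k + 1))) := by
    intro d
    induction d with
    | zero =>
      intro _
      rw [Nat.sub_zero]
      exact hmid
    | succ n ih =>
      intro hd
      have hm : k - (n + 1) < k := by omega
      have he : k - (n + 1) + 1 = k - n := by omega
      refine reconf_cons (indep_cfgA hD1 hSind hgS hgc _) ?_ (ih (by omega))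
      refine ⟨Sum.inl (⟨k - (n + 1), by omega⟩ : Fin (k + 1)),
        Sum.inr (Sum.inl (g ⟨k - (n + 1), hm⟩)), harcA (by omega) _ hm, ?_, ?_⟩
      · have h := cfgA_sdiff₁ g hm
        rw [he] at h
        exact h
      · have h := cfgA_sdiff₂ (g := g) hginj hm
        rw [he] at h
        exact h
  have := hphase1 k le_rfl
  rwa [Nat.sub_self, cfgA_zero g] at this

end Forward

/-- `U` is reconfigurable into `W` in `G'` under directed token
sliding iff `G` has a multicolored independent set. -/
theorem stmt_15 [Fintype V] [DecidableEq V] (G : SimpleGraph V)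
    (k : ℕ) (Vc : V → Fin k) (D : V → V → Prop)
    (hD1 : ∀ u v, D u v → G.Adj u v)
    (hD2 : ∀ u v, G.Adj u v → D u v ∨ D v u)
    (hD3 : ∀ u v, ¬ (D u v ∧ D v u))
    (hDacyc : ∀ v, ¬ Relation.TransGen D v v)
    (hDord : ∀ u v, D u v → Vc u ≤ Vc v) :
    Reconfigurable (A15 k Vc D)
        ((Finset.univ : Finset (Fin (k + 1))).image fun i =>
          (Sum.inl i : Fin (k + 1) ⊕ V ⊕ Fin (k + 1)))
        ((Finset.univ : Finset (Fin (k + 1))).image fun i =>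
          (Sum.inr (Sum.inr i) : Fin (k + 1) ⊕ V ⊕ Fin (k + 1))) ↔
      ∃ S : Finset V, UIndep G S ∧ ∀ j : Fin k, ∃! v, v ∈ S ∧ Vc v = j := by
  constructor
  · intro h
    exact stmt15_backward hD2 hDord h
  · rintro ⟨S, hSind, hS⟩
    exact stmt15_forward hD1 hSind hS
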